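/- Let X be a finite set, ω a distribution on X, and ψ a nonempty finite multiset of predicates on X that matches, i.e. Σ_{p∈supp(ψ)} p(x) ≤ 1 for every x ∈ X. Then both the Jeffrey validity and the Pearl validity of ψ in ω are at most 1: ω ⊨_J ψ ≤ 1 and ω ⊨_P ψ ≤ 1. -/
import Mathlib

noncomputable section

/-- The validity `ω ⊨ p` of a factor `p` in a distribution `ω` on a finite set. -/
def val {X : Type*} [Fintype X] (ω p : X → ℝ) : ℝ := ∑ x, ω x * p x

/-- The Jeffrey validity `ω ⊨_J ψ` of an evidence multiset `ψ` in `ω`. -/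
def jeffreyVal {X : Type*} [Fintype X] [DecidableEq (X → ℝ)]
    (ω : X → ℝ) (ψ : Multiset (X → ℝ)) : ℝ :=
  (Nat.multinomial ψ.toFinset ψ.count : ℝ) * ∏ p ∈ ψ.toFinset, (val ω p) ^ ψ.count p

/-- The conjunction `&ψ` of an evidence multiset `ψ`. -/
def conjM {X : Type*} [DecidableEq (X → ℝ)] (ψ : Multiset (X → ℝ)) : X → ℝ :=
  fun x => ∏ p ∈ ψ.toFinset, p x ^ ψ.count p

/-- The Pearl validity `ω ⊨_P ψ` of an evidence multiset `ψ` in `ω`. -/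
def pearlVal {X : Type*} [Fintype X] [DecidableEq (X → ℝ)]
    (ω : X → ℝ) (ψ : Multiset (X → ℝ)) : ℝ :=
  (Nat.multinomial ψ.toFinset ψ.count : ℝ) * val ω (conjM ψ)

/-- A single term of the multinomial expansion is at most the full power. -/
lemma multinomial_term_le {α : Type*} [DecidableEq α] (s : Finset α) (k : α → ℕ) (a : α → ℝ)
    (ha : ∀ i ∈ s, 0 ≤ a i) (hsum : ∑ i ∈ s, k i = n) (hsupp : ∀ i, k i ≠ 0 → i ∈ s) :
    (Nat.multinomial s k : ℝ) * ∏ i ∈ s, a i ^ k i ≤ (∑ i ∈ s, a i) ^ n := by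
  rw [Finset.sum_pow_eq_sum_piAntidiag s a n]
  refine Finset.single_le_sum (f := fun k => (Nat.multinomial s k : ℝ) * ∏ i ∈ s, a i ^ k i)
    (fun g _ => ?_) ?_
  · exact mul_nonneg (Nat.cast_nonneg _)
      (Finset.prod_nonneg fun i hi => pow_nonneg (ha i hi) _)
  · exact Finset.mem_piAntidiag.2 ⟨hsum, hsupp⟩

/-- For matching evidence, both the Jeffrey and the Pearl validity are at most 1. -/
theorem matching_evidence_validities_le_one
    {X : Type*} [Fintype X] [DecidableEq (X → ℝ)]
    (ω : X → ℝ) (ψ : Multiset (X → ℝ))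
    (hω0 : ∀ x, 0 ≤ ω x) (hω1 : ∑ x, ω x = 1)
    (hψ : ψ ≠ 0)
    (hpred : ∀ p ∈ ψ, ∀ x, 0 ≤ p x ∧ p x ≤ 1)
    (hmatch : ∀ x, ∑ p ∈ ψ.toFinset, p x ≤ 1) :
    jeffreyVal ω ψ ≤ 1 ∧ pearlVal ω ψ ≤ 1 := by
  set n := Multiset.card ψ with hn
  have hsum : ∑ p ∈ ψ.toFinset, ψ.count p = n := ψ.toFinset_sum_count_eq
  have hsupp : ∀ p, ψ.count p ≠ 0 → p ∈ ψ.toFinset := fun p hp =>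
    Multiset.mem_toFinset.2 (Multiset.count_pos.1 (Nat.pos_of_ne_zero hp))
  constructor
  · -- Jeffrey
    have hval : ∀ p ∈ ψ.toFinset, 0 ≤ val ω p := by
      intro p hp
      exact Finset.sum_nonneg fun x _ =>
        mul_nonneg (hω0 x) ((hpred p (Multiset.mem_toFinset.1 hp) x).1)
    have hle := multinomial_term_le ψ.toFinset ψ.count (fun p => val ω p) hval hsum hsupp
    refine hle.trans ?_
    have hS : ∑ p ∈ ψ.toFinset, val ω p ≤ 1 := by
      have : ∑ p ∈ ψ.toFinset, val ω p = ∑ x, ω x * ∑ p ∈ ψ.toFinset, p x := by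
        unfold val
        rw [Finset.sum_comm]
        exact Finset.sum_congr rfl fun x _ => (Finset.mul_sum _ _ _).symm
      rw [this, ← hω1]
      exact Finset.sum_le_sum fun x _ => mul_le_of_le_one_right (hω0 x) (hmatch x)
    calc (∑ p ∈ ψ.toFinset, val ω p) ^ n ≤ 1 ^ n :=
          pow_le_pow_left₀ (Finset.sum_nonneg hval) hS n
      _ = 1 := one_pow n
  · -- Pearl
    have hpt : ∀ x, (Nat.multinomial ψ.toFinset ψ.count : ℝ) * conjM ψ x ≤ 1 := by
      intro x
      have hle := multinomial_term_le ψ.toFinset ψ.count (fun p => p x)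
        (fun p hp => (hpred p (Multiset.mem_toFinset.1 hp) x).1) hsum hsupp
      refine hle.trans ?_
      calc (∑ p ∈ ψ.toFinset, p x) ^ n ≤ 1 ^ n :=
            pow_le_pow_left₀ (Finset.sum_nonneg fun p hp =>
              (hpred p (Multiset.mem_toFinset.1 hp) x).1) (hmatch x) n
        _ = 1 := one_pow n
    have hconj0 : ∀ x, 0 ≤ conjM ψ x := fun x =>
      Finset.prod_nonneg fun p hp => pow_nonneg ((hpred p (Multiset.mem_toFinset.1 hp) x).1) _
    have : pearlVal ω ψ = ∑ x, ω x * ((Nat.multinomial ψ.toFinset ψ.count : ℝ) * conjM ψ x) := by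
      rw [pearlVal, val, Finset.mul_sum]
      exact Finset.sum_congr rfl fun x _ => by ring
    rw [this, ← hω1]
    exact Finset.sum_le_sum fun x _ => mul_le_of_le_one_right (hω0 x) (hpt x)
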